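/- For any positive integer r, the Bell number B_r satisfies B_r = ∑_{λ ⊢ r} c(λ,1)^r / ∏_{l=1}^{r} (l^{c(λ,l)} · c(λ,l)!), where the sum is over integer partitions λ of r and c(λ,l) is the number of parts of λ equal to l. -/

import Mathlib

open Finset

/-- The `k`-th Bell number: the number of set partitions of a `k`-element set,
via the standard recurrence B₀ = 1, B_{n+1} = ∑_{k ≤ n} C(n,k) B_k. -/
def bellNumber : ℕ → ℕ
  | 0 => 1
  | n + 1 => ∑ k ∈ (Finset.range (n + 1)).attach, n.choose k.1 * bellNumber k.1
decreasing_by exact Finset.mem_range.mp k.2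

theorem bellNumber_succ (n : ℕ) :
    bellNumber (n + 1) = ∑ k ∈ Finset.range (n + 1), n.choose k * bellNumber k := by
  rw [bellNumber]
  exact Finset.sum_attach (Finset.range (n + 1)) (fun k => n.choose k * bellNumber k)

instance setoidFinite (α : Type*) [Finite α] : Finite (Setoid α) :=
  Finite.of_injective (fun s : Setoid α => s.r)
    (fun s t h => Setoid.ext fun x y => iff_of_eq (congrFun (congrFun h x) y))

open Classical in
/-- the equivalence class of `a` as a Finset -/
noncomputable def classFinset {α : Type*} [Fintype α] (s : Setoid α) (a : α) : Finset α :=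
  Finset.univ.filter (fun x => s a x)

theorem mem_classFinset {α : Type*} [Fintype α] (s : Setoid α) (a x : α) :
    x ∈ classFinset s a ↔ s a x := by
  classical simp [classFinset]

/-- extend a setoid on the complement of A by making A one class -/
def extendSetoid {α : Type*} (A : Finset α) (t : Setoid {x : α // x ∉ A}) : Setoid α where
  r x y := (x ∈ A ∧ y ∈ A) ∨ ∃ hx : x ∉ A, ∃ hy : y ∉ A, t ⟨x, hx⟩ ⟨y, hy⟩
  iseqv := by
    constructor
    · intro x
      by_cases hx : x ∈ A
      · exact Or.inl ⟨hx, hx⟩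
      · exact Or.inr ⟨hx, hx, t.refl _⟩
    · rintro x y (⟨hx, hy⟩ | ⟨hx, hy, h⟩)
      · exact Or.inl ⟨hy, hx⟩
      · exact Or.inr ⟨hy, hx, t.symm h⟩
    · rintro x y z (⟨hx, hy⟩ | ⟨hx, hy, h⟩) (⟨hy', hz⟩ | ⟨hy', hz, h'⟩)
      · exact Or.inl ⟨hx, hz⟩
      · exact absurd hy hy'
      · exact absurd hy' hy
      · exact Or.inr ⟨hx, hz, t.trans h h'⟩

/-- setoids with class of `a` equal to `A` correspond to setoids on the complement -/
noncomputable def setoidFiberEquiv {α : Type*} [Fintype α] (a : α) (A : Finset α) (ha : a ∈ A) :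
    {s : Setoid α // classFinset s a = A} ≃ Setoid {x : α // x ∉ A} where
  toFun s := Setoid.comap Subtype.val s.1
  invFun t := ⟨extendSetoid A t, by
    ext x
    rw [mem_classFinset]
    constructor
    · rintro (⟨_, hx⟩ | ⟨ha', _⟩)
      · exact hx
      · exact absurd ha ha'
    · intro hx
      exact Or.inl ⟨ha, hx⟩⟩
  left_inv := by
    rintro ⟨s, hs⟩
    apply Subtype.ext
    apply Setoid.ext
    intro x y
    have hA : ∀ z, z ∈ A ↔ s a z := fun z => by rw [← hs, mem_classFinset]
    show (x ∈ A ∧ y ∈ A) ∨ _ ↔ _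
    constructor
    · rintro (⟨hx, hy⟩ | ⟨hx, hy, h⟩)
      · exact s.trans (s.symm ((hA x).1 hx)) ((hA y).1 hy)
      · exact h
    · intro h
      by_cases hx : x ∈ A
      · exact Or.inl ⟨hx, (hA y).2 (s.trans ((hA x).1 hx) h)⟩
      · have hy : y ∉ A := fun hy => hx ((hA x).2 (s.trans ((hA y).1 hy) (s.symm h)))
        exact Or.inr ⟨hx, hy, h⟩
  right_inv := by
    intro t
    apply Setoid.ext
    rintro ⟨x, hx⟩ ⟨y, hy⟩
    show (x ∈ A ∧ y ∈ A) ∨ _ ↔ _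
    constructor
    · rintro (⟨hx', _⟩ | ⟨hx', hy', h⟩)
      · exact absurd hx' hx
      · convert h
    · intro h
      exact Or.inr ⟨hx, hy, h⟩

/-- transporting setoids along an equivalence -/
def setoidCongr {α β : Type*} (e : α ≃ β) : Setoid α ≃ Setoid β where
  toFun s := Setoid.comap e.symm s
  invFun t := Setoid.comap e t
  left_inv s := Setoid.ext fun x y => by simp [Setoid.comap_rel]
  right_inv t := Setoid.ext fun x y => by simp [Setoid.comap_rel]

theorem card_setoid : ∀ (n : ℕ) (α : Type) [Fintype α] [DecidableEq α],
    Fintype.card α = n → Nat.card (Setoid α) = bellNumber n := by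
  intro n
  induction n using Nat.strong_induction_on with
  | _ n IH =>
    intro α _ _ hcard
    match n, hcard with
    | 0, hcard =>
      haveI : IsEmpty α := Fintype.card_eq_zero_iff.mp hcard
      haveI : Unique (Setoid α) :=
        ⟨⟨⊥⟩, fun s => Setoid.ext fun x _ => isEmptyElim x⟩
      simp [Nat.card_unique, bellNumber]
    | (n + 1), hcard =>
      obtain ⟨a⟩ := Fintype.card_pos_iff.mp (by omega : 0 < Fintype.card α)
      haveI : Fintype (Setoid α) := Fintype.ofFinite _
      rw [Nat.card_eq_fintype_card, ← Finset.card_univ]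
      rw [Finset.card_eq_sum_card_fiberwise
        (f := fun s : Setoid α => classFinset s a)
        (t := Finset.univ.filter (fun A : Finset α => a ∈ A))
        (fun s _ => Finset.mem_filter.2 ⟨Finset.mem_univ _, (mem_classFinset s a a).2 (s.refl a)⟩)]
      have hfiber : ∀ A ∈ Finset.univ.filter (fun A : Finset α => a ∈ A),
          (Finset.univ.filter (fun s : Setoid α => classFinset s a = A)).card
            = bellNumber (n + 1 - A.card) := by
        intro A hA
        have haA : a ∈ A := (Finset.mem_filter.1 hA).2
        have h1 : (Finset.univ.filter (fun s : Setoid α => classFinset s a = A)).card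
            = Nat.card {s : Setoid α // classFinset s a = A} := by
          rw [Nat.card_eq_fintype_card, Fintype.card_subtype]
        rw [h1, Nat.card_congr (setoidFiberEquiv a A haA)]
        have hsub : Fintype.card {x : α // x ∉ A} = n + 1 - A.card := by
          simp [Fintype.card_subtype_compl, hcard]
        have hle : n + 1 - A.card < n + 1 := by
          have : 0 < A.card := Finset.card_pos.2 ⟨a, haA⟩
          omega
        exact IH _ hle _ hsub
      rw [Finset.sum_congr rfl hfiber]
      have hre : ∑ A ∈ Finset.univ.filter (fun A : Finset α => a ∈ A),
          bellNumber (n + 1 - A.card)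
          = ∑ B ∈ (Finset.univ.erase a).powerset, bellNumber (n - B.card) := by
        refine Finset.sum_nbij' (fun A => A.erase a) (fun B => insert a B) ?_ ?_ ?_ ?_ ?_
        · intro A hA
          exact Finset.mem_powerset.2 (Finset.erase_subset_erase a (Finset.subset_univ A))
        · intro B hB
          exact Finset.mem_filter.2 ⟨Finset.mem_univ _, Finset.mem_insert_self a B⟩
        · intro A hA
          exact Finset.insert_erase (Finset.mem_filter.1 hA).2
        · intro B hB
          refine Finset.erase_insert ?_
          intro haB
          exact Finset.notMem_erase a _ (Finset.mem_powerset.1 hB haB)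
        · intro A hA
          have haA : a ∈ A := (Finset.mem_filter.1 hA).2
          rw [Finset.card_erase_of_mem haA]
          congr 1
          have : 0 < A.card := Finset.card_pos.2 ⟨a, haA⟩
          omega
      rw [hre, Finset.sum_powerset_apply_card (fun m => bellNumber (n - m))]
      have hcarderase : (Finset.univ.erase a).card = n := by
        rw [Finset.card_erase_of_mem (Finset.mem_univ a), Finset.card_univ, hcard]
        omega
      rw [hcarderase, bellNumber_succ]
      rw [← Finset.sum_range_reflect (fun k => n.choose k * bellNumber k) (n + 1)]
      refine Finset.sum_congr rfl fun j hj => ?_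
      have hjn : j ≤ n := Nat.lt_succ_iff.1 (Finset.mem_range.1 hj)
      have h2 : n + 1 - 1 - j = n - j := by omega
      rw [smul_eq_mul, h2, Nat.choose_symm hjn]

open MulAction in
noncomputable def orbitSetoidEquiv (r : ℕ) :
    Quotient (orbitRel (Equiv.Perm (Fin r)) (Fin r → Fin r)) ≃ Setoid (Fin r) := by
  classical
  refine Equiv.ofBijective
    (Quotient.lift (fun f : Fin r → Fin r => Setoid.ker f) ?_) ⟨?_, ?_⟩
  · rintro f g ⟨σ, rfl⟩
    apply Setoid.ext
    intro x y
    show σ (g x) = σ (g y) ↔ g x = g y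
    exact σ.apply_eq_iff_eq
  · rintro ⟨f⟩ ⟨g⟩ h
    have hker : Setoid.ker f = Setoid.ker g := h
    apply Quotient.sound
    -- build σ with σ • g = f
    have key : ∀ x y : Fin r, g x = g y ↔ f x = f y := fun x y => by
      constructor
      · intro hg
        exact (Setoid.ext_iff.mp hker x y).mpr hg
      · intro hf
        exact (Setoid.ext_iff.mp hker x y).mp hf
    let e0 : {x : Fin r // x ∈ Set.range g} ≃ {x : Fin r // x ∈ Set.range f} :=
      { toFun := fun b => ⟨f (Classical.choose b.2), Set.mem_range_self _⟩
        invFun := fun b => ⟨g (Classical.choose b.2), Set.mem_range_self _⟩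
        left_inv := by
          rintro ⟨b, hb⟩
          have h1 : g (Classical.choose hb) = b := Classical.choose_spec hb
          apply Subtype.ext
          show g (Classical.choose (Set.mem_range_self _ : f _ ∈ Set.range f)) = b
          have h2 := Classical.choose_spec
            (Set.mem_range_self (f := f) (Classical.choose hb))
          exact ((key _ _).mpr h2).trans h1
        right_inv := by
          rintro ⟨b, hb⟩
          have h1 : f (Classical.choose hb) = b := Classical.choose_spec hb
          apply Subtype.ext
          show f (Classical.choose (Set.mem_range_self _ : g _ ∈ Set.range g)) = b
          have h2 := Classical.choose_spec
            (Set.mem_range_self (f := g) (Classical.choose hb))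
          exact ((key _ _).mp h2).trans h1 }
    refine ⟨e0.extendSubtype, ?_⟩
    funext x
    show e0.extendSubtype (g x) = f x
    rw [Equiv.extendSubtype_apply_of_mem e0 (g x) (Set.mem_range_self x)]
    show f (Classical.choose (Set.mem_range_self x : g x ∈ Set.range g)) = f x
    exact (key _ _).mp (Classical.choose_spec (Set.mem_range_self (f := g) x))
  · intro s
    haveI : DecidableEq (Quotient s) := Classical.decEq _
    have hle : Fintype.card (Quotient s) ≤ Fintype.card (Fin r) :=
      Fintype.card_le_of_surjective (Quotient.mk s) Quotient.mk_surjective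
    obtain ⟨ι⟩ := Function.Embedding.nonempty_of_card_le hle
    refine ⟨Quotient.mk _ (fun x => ι (Quotient.mk s x)), ?_⟩
    apply Setoid.ext
    intro x y
    show ι (Quotient.mk s x) = ι (Quotient.mk s y) ↔ s x y
    rw [ι.apply_eq_iff_eq]
    exact Quotient.eq

open MulAction in
theorem sum_fix_pow (r : ℕ) :
    ∑ σ : Equiv.Perm (Fin r), (Finset.univ.filter fun x => σ x = x).card ^ r
      = bellNumber r * r.factorial := by
  classical
  haveI : ∀ a : Equiv.Perm (Fin r), Fintype (fixedBy (Fin r → Fin r) a) :=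
    fun a => Fintype.ofFinite _
  haveI : Fintype (Quotient (orbitRel (Equiv.Perm (Fin r)) (Fin r → Fin r))) :=
    Fintype.ofFinite _
  have hb := MulAction.sum_card_fixedBy_eq_card_orbits_mul_card_group
    (Equiv.Perm (Fin r)) (Fin r → Fin r)
  have h1 : ∀ σ : Equiv.Perm (Fin r),
      Fintype.card (fixedBy (Fin r → Fin r) σ)
        = (Finset.univ.filter fun x => σ x = x).card ^ r := by
    intro σ
    have e : fixedBy (Fin r → Fin r) σ ≃ (Fin r → {x : Fin r // σ x = x}) :=
      { toFun := fun f i => ⟨f.1 i, congrFun f.2 i⟩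
        invFun := fun g => ⟨fun i => (g i).1, funext fun i => (g i).2⟩
        left_inv := fun f => Subtype.ext rfl
        right_inv := fun g => rfl }
    rw [Fintype.card_congr e, Fintype.card_fun, Fintype.card_subtype, Fintype.card_fin]
  have h2 : Fintype.card (Quotient (orbitRel (Equiv.Perm (Fin r)) (Fin r → Fin r)))
      = bellNumber r := by
    rw [← Nat.card_eq_fintype_card, Nat.card_congr (orbitSetoidEquiv r)]
    exact card_setoid r (Fin r) (Fintype.card_fin r)
  rw [← Finset.sum_congr rfl (fun σ _ => h1 σ), hb, h2, Fintype.card_perm, Fintype.card_fin]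

theorem card_fix_fiber (r : ℕ) (F : Finset (Fin r)) :
    Fintype.card {σ : Equiv.Perm (Fin r) // Finset.univ.filter (fun x => σ x = x) = F}
      = numDerangements (r - F.card) := by
  classical
  have e1 := derangements.subtypeEquiv (fun x : Fin r => x ∉ F)
  have e2 : {f : Equiv.Perm (Fin r) // ∀ a, ¬(a ∉ F) ↔ a ∈ Function.fixedPoints f}
      ≃ {σ : Equiv.Perm (Fin r) // Finset.univ.filter (fun x => σ x = x) = F} :=
    Equiv.subtypeEquivRight (fun f => by
      constructor
      · intro h
        ext x
        rw [Finset.mem_filter]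
        constructor
        · rintro ⟨-, hx⟩
          exact not_not.mp ((h x).mpr hx)
        · intro hx
          exact ⟨Finset.mem_univ _, (h x).mp (not_not.mpr hx)⟩
      · rintro rfl a
        rw [not_not, Finset.mem_filter]
        constructor
        · rintro ⟨-, h⟩
          exact h
        · intro h
          exact ⟨Finset.mem_univ _, h⟩)
  have h1 : Fintype.card {σ : Equiv.Perm (Fin r) // Finset.univ.filter (fun x => σ x = x) = F}
      = Fintype.card (derangements {x : Fin r // x ∉ F}) :=
    (Fintype.card_congr (e1.trans e2)).symm
  rw [h1, card_derangements_eq_numDerangements]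
  congr 1
  simp [Fintype.card_subtype_compl]

theorem sum_fix_pow_eq (r : ℕ) :
    ∑ σ : Equiv.Perm (Fin r), (Finset.univ.filter fun x => σ x = x).card ^ r
      = ∑ k ∈ Finset.range (r + 1), r.choose k * (numDerangements (r - k) * k ^ r) := by
  classical
  rw [← Finset.sum_fiberwise_of_maps_to
    (g := fun σ : Equiv.Perm (Fin r) => Finset.univ.filter (fun x => σ x = x))
    (t := (Finset.univ : Finset (Fin r)).powerset)
    (fun σ _ => Finset.mem_powerset.2 (Finset.subset_univ _))
    (fun σ => (Finset.univ.filter fun x => σ x = x).card ^ r)]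
  have hstep : ∀ F ∈ (Finset.univ : Finset (Fin r)).powerset,
      ∑ σ ∈ Finset.univ.filter
          (fun σ : Equiv.Perm (Fin r) => Finset.univ.filter (fun x => σ x = x) = F),
        (Finset.univ.filter fun x => σ x = x).card ^ r
      = numDerangements (r - F.card) * F.card ^ r := by
    intro F _
    rw [Finset.sum_congr rfl (fun σ hσ => by
      rw [(Finset.mem_filter.1 hσ).2]), Finset.sum_const]
    rw [show (Finset.univ.filter
        (fun σ : Equiv.Perm (Fin r) => Finset.univ.filter (fun x => σ x = x) = F)).card
      = Fintype.card {σ : Equiv.Perm (Fin r) // Finset.univ.filter (fun x => σ x = x) = F}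
      from (Fintype.card_subtype _).symm]
    rw [card_fix_fiber, smul_eq_mul]
  rw [Finset.sum_congr rfl hstep,
    Finset.sum_powerset_apply_card (fun m => numDerangements (r - m) * m ^ r)]
  simp only [smul_eq_mul, Finset.card_univ, Fintype.card_fin]

/-- the denominator ∏ l^{c_l} c_l! over parts present -/
noncomputable def Dq (s : Multiset ℕ) : ℚ :=
  ∏ l ∈ s.toFinset, ((l : ℚ) ^ (s.count l) * (Nat.factorial (s.count l) : ℚ))

theorem Dq_pos {s : Multiset ℕ} (hs : ∀ l ∈ s, 0 < l) : 0 < Dq s := by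
  apply Finset.prod_pos
  intro l hl
  have : 0 < l := hs l (Multiset.mem_toFinset.1 hl)
  positivity

theorem Dq_eq_Icc {r : ℕ} (lam : Nat.Partition r) :
    ∏ l ∈ Finset.Icc 1 r,
      ((l : ℚ) ^ (lam.parts.count l) * (Nat.factorial (lam.parts.count l) : ℚ))
      = Dq lam.parts := by
  rw [Dq]
  symm
  apply Finset.prod_subset
  · intro l hl
    have hmem := Multiset.mem_toFinset.1 hl
    rw [Finset.mem_Icc]
    refine ⟨lam.parts_pos hmem, ?_⟩
    calc l ≤ lam.parts.sum := Multiset.le_sum_of_mem hmem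
    _ = r := lam.parts_sum
  · intro l _ hl
    rw [Multiset.count_eq_zero_of_notMem (fun h => hl (Multiset.mem_toFinset.2 h))]
    simp

theorem Dq_cons (s : Multiset ℕ) (l : ℕ) :
    Dq (l ::ₘ s) = ((l : ℚ) * (s.count l + 1)) * Dq s := by
  classical
  rw [Dq, Dq, Multiset.toFinset_cons]
  by_cases hl : l ∈ s.toFinset
  · rw [Finset.insert_eq_self.2 hl]
    rw [← Finset.mul_prod_erase _ _ hl, ← Finset.mul_prod_erase _ _ hl]
    have hcount : ∀ x ∈ s.toFinset.erase l,
        (l ::ₘ s).count x = s.count x := by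
      intro x hx
      rw [Multiset.count_cons_of_ne (Finset.ne_of_mem_erase hx)]
    rw [Finset.prod_congr rfl (fun x hx => by rw [hcount x hx])]
    rw [Multiset.count_cons_self, ← mul_assoc]
    congr 1
    push_cast [Nat.factorial_succ]
    ring
  · rw [Finset.prod_insert hl]
    have h0 : s.count l = 0 := by
      rw [Multiset.count_eq_zero_of_notMem (fun h => hl (Multiset.mem_toFinset.2 h))]
    rw [Finset.prod_congr rfl (fun x hx => by
      rw [Multiset.count_cons_of_ne (by rintro rfl; exact hl hx)])]
    rw [Multiset.count_cons_self, h0]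
    norm_num

theorem Dq_filter_ne_one (s : Multiset ℕ) :
    Dq s = (Nat.factorial (s.count 1) : ℚ) * Dq (s.filter (· ≠ 1)) := by
  classical
  by_cases h1 : 1 ∈ s
  · have htf : (s.filter (· ≠ 1)).toFinset = s.toFinset.erase 1 := by
      rw [Multiset.toFinset_filter]
      ext x
      simp [Finset.mem_filter, Finset.mem_erase, and_comm]
    have hcount : ∀ x, x ≠ 1 → (s.filter (· ≠ 1)).count x = s.count x := by
      intro x hx
      rw [Multiset.count_filter, if_pos hx]
    have hprod : ∏ x ∈ s.toFinset.erase 1,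
        ((x : ℚ) ^ ((s.filter (· ≠ 1)).count x)
          * (Nat.factorial ((s.filter (· ≠ 1)).count x) : ℚ))
        = ∏ x ∈ s.toFinset.erase 1,
        ((x : ℚ) ^ (s.count x) * (Nat.factorial (s.count x) : ℚ)) := by
      refine Finset.prod_congr rfl fun x hx => ?_
      rw [hcount x (Finset.mem_erase.1 hx).1]
    rw [Dq, Dq, htf, hprod, ← Finset.mul_prod_erase _ _ (Multiset.mem_toFinset.2 h1)]
    congr 1
    simp
  · have h0 : s.count 1 = 0 := Multiset.count_eq_zero_of_notMem h1
    have hf : s.filter (· ≠ 1) = s := by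
      rw [Multiset.filter_eq_self]
      intro a ha
      exact fun h => h1 (h ▸ ha)
    rw [h0, hf]
    norm_num

noncomputable def Tq (m : ℕ) : ℚ :=
  ∑ μ ∈ Finset.univ.filter (fun μ : Nat.Partition m => 1 ∉ μ.parts), (Dq μ.parts)⁻¹

theorem Tq_zero : Tq 0 = 1 := by
  rw [Tq]
  rw [show (Finset.univ : Finset (Nat.Partition 0)) = {default} from rfl]
  have h : (default : Nat.Partition 0).parts = 0 := rfl
  rw [Finset.filter_singleton, if_pos (by rw [h]; exact Multiset.notMem_zero 1)]
  rw [Finset.sum_singleton, h]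
  simp [Dq]

theorem multiset_sum_eq (s : Multiset ℕ) :
    s.sum = ∑ a ∈ s.toFinset, s.count a * a := by
  conv_lhs => rw [show s.sum = (s.map id).sum by rw [Multiset.map_id]]
  rw [Finset.sum_multiset_map_count]
  simp

theorem mem_le_sum {s : Multiset ℕ} {a : ℕ} (h : a ∈ s) : a ≤ s.sum := by
  obtain ⟨t, rfl⟩ := Multiset.exists_cons_of_mem h
  rw [Multiset.sum_cons]
  exact Nat.le_add_right a t.sum

theorem Tq_rec (m : ℕ) (hm : 1 ≤ m) :
    (m : ℚ) * Tq m = ∑ l ∈ Finset.Icc 2 m, Tq (m - l) := by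
  classical
  rw [Tq, Finset.mul_sum]
  have step1 : ∀ μ ∈ Finset.univ.filter (fun μ : Nat.Partition m => 1 ∉ μ.parts),
      (m : ℚ) * (Dq μ.parts)⁻¹
        = ∑ l ∈ Finset.Icc 2 m, ((l : ℚ) * (μ.parts.count l)) * (Dq μ.parts)⁻¹ := by
    intro μ hμ
    have h1 : 1 ∉ μ.parts := (Finset.mem_filter.1 hμ).2
    rw [← Finset.sum_mul]
    congr 1
    have hsum : (m : ℚ) = ∑ l ∈ μ.parts.toFinset, ((l : ℚ) * (μ.parts.count l)) := by
      have h := multiset_sum_eq μ.parts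
      rw [μ.parts_sum] at h
      calc (m : ℚ) = ((∑ a ∈ μ.parts.toFinset, μ.parts.count a * a : ℕ) : ℚ) := by
            rw [← h]
        _ = _ := by push_cast; exact Finset.sum_congr rfl fun l _ => by ring
    rw [hsum]
    apply Finset.sum_subset
    · intro l hl
      have hmem := Multiset.mem_toFinset.1 hl
      rw [Finset.mem_Icc]
      constructor
      · rcases Nat.lt_or_ge l 2 with h | h
        · interval_cases l
          · exact absurd (μ.parts_pos hmem) (lt_irrefl 0)
          · exact absurd hmem h1
        · exact h
      · calc l ≤ μ.parts.sum := mem_le_sum hmem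
          _ = m := μ.parts_sum
    · intro l _ hl
      rw [Multiset.count_eq_zero_of_notMem (fun h => hl (Multiset.mem_toFinset.2 h))]
      simp
  rw [Finset.sum_congr rfl step1, Finset.sum_comm]
  refine Finset.sum_congr rfl fun l hl => ?_
  obtain ⟨hl2, hlm⟩ := Finset.mem_Icc.1 hl
  -- restrict to partitions containing l
  rw [← Finset.sum_filter_add_sum_filter_not _ (fun μ : Nat.Partition m => l ∈ μ.parts)]
  have hz : ∑ μ ∈ (Finset.univ.filter (fun μ : Nat.Partition m => 1 ∉ μ.parts)).filter
      (fun μ => ¬ l ∈ μ.parts), ((l : ℚ) * (μ.parts.count l)) * (Dq μ.parts)⁻¹ = 0 := by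
    refine Finset.sum_eq_zero fun μ hμ => ?_
    rw [Multiset.count_eq_zero_of_notMem (Finset.mem_filter.1 hμ).2]
    simp
  rw [hz, add_zero, Tq]
  refine Finset.sum_bij' (i := fun μ hμ => ⟨μ.parts.erase l, ?_, ?_⟩)
    (j := fun ν hν => ⟨l ::ₘ ν.parts, ?_, ?_⟩) ?_ ?_ ?_ ?_ ?_
  · intro j hj
    exact μ.parts_pos (Multiset.mem_of_mem_erase hj)
  · have hμl : l ∈ μ.parts := (Finset.mem_filter.1 hμ).2
    have h := μ.parts_sum
    have h2 : l + (μ.parts.erase l).sum = m := by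
      rw [← Multiset.sum_cons, Multiset.cons_erase hμl, μ.parts_sum]
    omega
  · intro j hj
    rcases Multiset.mem_cons.1 hj with rfl | hj
    · omega
    · exact ν.parts_pos hj
  · rw [Multiset.sum_cons, ν.parts_sum]
    omega
  · intro μ hμ
    obtain ⟨hμ1, hμl⟩ := Finset.mem_filter.1 hμ
    have h1 : 1 ∉ μ.parts := (Finset.mem_filter.1 hμ1).2
    exact Finset.mem_filter.2 ⟨Finset.mem_univ _,
      fun h => h1 (Multiset.mem_of_mem_erase h)⟩
  · intro ν hν
    have h1 : 1 ∉ ν.parts := (Finset.mem_filter.1 hν).2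
    refine Finset.mem_filter.2 ⟨Finset.mem_filter.2 ⟨Finset.mem_univ _, ?_⟩,
      Multiset.mem_cons_self l ν.parts⟩
    intro h
    rcases Multiset.mem_cons.1 h with h | h
    · omega
    · exact h1 h
  · intro μ hμ
    have hμl : l ∈ μ.parts := (Finset.mem_filter.1 hμ).2
    apply Nat.Partition.ext
    simp only
    exact Multiset.cons_erase hμl
  · intro ν hν
    apply Nat.Partition.ext
    simp only
    exact Multiset.erase_cons_head l ν.parts
  · intro μ hμ
    have hμl : l ∈ μ.parts := (Finset.mem_filter.1 hμ).2
    have hparts : μ.parts = l ::ₘ μ.parts.erase l := (Multiset.cons_erase hμl).symm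
    have hDq : Dq μ.parts
        = ((l : ℚ) * ((μ.parts.erase l).count l + 1)) * Dq (μ.parts.erase l) := by
      conv_lhs => rw [hparts]
      exact Dq_cons _ l
    have hcount : (μ.parts.count l : ℚ) = (μ.parts.erase l).count l + 1 := by
      conv_lhs => rw [hparts]
      rw [Multiset.count_cons_self]
      push_cast
      ring
    have hne : (l : ℚ) * ((μ.parts.erase l).count l + 1) ≠ 0 := by
      have hl0 : (0 : ℚ) < l := by
        have : 0 < l := by omega
        exact_mod_cast this
      positivity
    rw [hDq, hcount, mul_inv, ← mul_assoc, mul_inv_cancel₀ hne, one_mul]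

theorem derangement_ratio (n : ℕ) :
    (numDerangements (n + 1) : ℚ) / (Nat.factorial n)
      = ∑ j ∈ Finset.range n, (numDerangements j : ℚ) / (Nat.factorial j) := by
  induction n with
  | zero => simp
  | succ n IH =>
    rw [Finset.sum_range_succ, ← IH]
    have hrec : (numDerangements (n + 2) : ℚ)
        = (n + 1) * (numDerangements n + numDerangements (n + 1)) := by
      exact_mod_cast congrArg (Nat.cast (R := ℚ)) (numDerangements_add_two n)
    rw [hrec, Nat.factorial_succ]
    have h1 : (Nat.factorial n : ℚ) ≠ 0 := by exact_mod_cast n.factorial_ne_zero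
    have h2 : ((n : ℚ) + 1) ≠ 0 := by positivity
    field_simp
    push_cast
    ring

theorem Tq_eq : ∀ m : ℕ, Tq m = (numDerangements m : ℚ) / (Nat.factorial m) := by
  intro m
  induction m using Nat.strong_induction_on with
  | _ m IH =>
    match m with
    | 0 => simp [Tq_zero]
    | (n + 1) =>
      have h := Tq_rec (n + 1) (by omega)
      have hsum : ∑ l ∈ Finset.Icc 2 (n + 1), Tq (n + 1 - l)
          = ∑ j ∈ Finset.range n, (numDerangements j : ℚ) / (Nat.factorial j) := by
        rw [Finset.sum_congr rfl (fun l hl => IH (n + 1 - l)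
          (by obtain ⟨h2, _⟩ := Finset.mem_Icc.1 hl; omega))]
        refine Finset.sum_nbij' (i := fun l => n + 1 - l) (j := fun j => n + 1 - j)
          ?_ ?_ ?_ ?_ ?_
        · intro l hl
          obtain ⟨h2, h3⟩ := Finset.mem_Icc.1 hl
          rw [Finset.mem_range]
          omega
        · intro j hj
          have := Finset.mem_range.1 hj
          rw [Finset.mem_Icc]
          omega
        · intro l hl
          obtain ⟨h2, h3⟩ := Finset.mem_Icc.1 hl
          omega
        · intro j hj
          have := Finset.mem_range.1 hj
          omega
        · intro l hl
          rfl
      rw [hsum, ← derangement_ratio] at h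
      have hne : ((n : ℚ) + 1) ≠ 0 := by positivity
      have : Tq (n + 1) = (numDerangements (n + 1) : ℚ) / (Nat.factorial n) / (n + 1) := by
        field_simp at h ⊢
        push_cast at h
        linarith [h]
      rw [this, Nat.factorial_succ]
      push_cast
      rw [div_div]
      ring_nf

theorem filter_eq_one_part {r : ℕ} (lam : Nat.Partition r) :
    lam.parts.filter (fun x => ¬ x ≠ 1) = Multiset.replicate (lam.parts.count 1) 1 := by
  rw [Multiset.filter_congr (fun x _ => by
    constructor
    · intro h; exact not_not.1 h
    · intro h; exact not_not.2 h : ∀ x ∈ lam.parts, (¬ x ≠ 1) ↔ x = 1)]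
  exact Multiset.filter_eq' lam.parts 1

theorem sum_split (r : ℕ) :
    ∑ lam : Nat.Partition r, ((lam.parts.count 1 : ℚ)) ^ r / Dq lam.parts
      = ∑ k ∈ Finset.range (r + 1),
          (k : ℚ) ^ r / (Nat.factorial k) * Tq (r - k) := by
  classical
  have hmaps : ∀ lam : Nat.Partition r, lam ∈ Finset.univ →
      lam.parts.count 1 ∈ Finset.range (r + 1) := by
    intro lam _
    rw [Finset.mem_range]
    have h1 : lam.parts.count 1 ≤ Multiset.card lam.parts := Multiset.count_le_card _ _
    have h2 : Multiset.card lam.parts ≤ lam.parts.sum := by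
      have := Multiset.card_nsmul_le_sum (s := lam.parts) (a := 1)
        (fun x hx => lam.parts_pos hx)
      simpa using this
    have h3 := lam.parts_sum
    omega
  rw [← Finset.sum_fiberwise_of_maps_to hmaps
    (fun lam : Nat.Partition r => ((lam.parts.count 1 : ℚ)) ^ r / Dq lam.parts)]
  refine Finset.sum_congr rfl fun k hk => ?_
  have hkr : k ≤ r := Nat.lt_succ_iff.1 (Finset.mem_range.1 hk)
  rw [Tq, Finset.mul_sum]
  have hsum_filter : ∀ lam : Nat.Partition r, lam.parts.count 1 = k →
      (lam.parts.filter (· ≠ 1)).sum = r - k := by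
    intro lam hcnt
    have hadd := Multiset.filter_add_not (fun x => x ≠ 1) lam.parts
    have := congrArg Multiset.sum hadd
    rw [Multiset.sum_add, filter_eq_one_part, hcnt, Multiset.sum_replicate,
      lam.parts_sum] at this
    simp only [smul_eq_mul, mul_one] at this
    omega
  refine Finset.sum_bij' (i := fun lam hlam => ⟨lam.parts.filter (· ≠ 1), ?_, ?_⟩)
    (j := fun μ hμ => ⟨μ.parts + Multiset.replicate k 1, ?_, ?_⟩) ?_ ?_ ?_ ?_ ?_
  · intro j hj
    exact lam.parts_pos (Multiset.mem_of_mem_filter hj)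
  · exact hsum_filter lam (Finset.mem_filter.1 hlam).2
  · intro j hj
    rcases Multiset.mem_add.1 hj with hj | hj
    · exact μ.parts_pos hj
    · rw [Multiset.eq_of_mem_replicate hj]; omega
  · rw [Multiset.sum_add, μ.parts_sum, Multiset.sum_replicate]
    simp only [smul_eq_mul, mul_one]
    omega
  · intro lam hlam
    refine Finset.mem_filter.2 ⟨Finset.mem_univ _, ?_⟩
    intro h
    exact (Multiset.mem_filter.1 h).2 rfl
  · intro μ hμ
    have h1 : 1 ∉ μ.parts := (Finset.mem_filter.1 hμ).2
    refine Finset.mem_filter.2 ⟨Finset.mem_univ _, ?_⟩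
    show Multiset.count 1 (μ.parts + Multiset.replicate k 1) = k
    rw [Multiset.count_add, Multiset.count_eq_zero_of_notMem h1,
      Multiset.count_replicate_self, zero_add]
  · intro lam hlam
    have hcnt : lam.parts.count 1 = k := (Finset.mem_filter.1 hlam).2
    apply Nat.Partition.ext
    show lam.parts.filter (· ≠ 1) + Multiset.replicate k 1 = lam.parts
    conv_rhs => rw [← Multiset.filter_add_not (fun x => x ≠ 1) lam.parts]
    rw [filter_eq_one_part, hcnt]
  · intro μ hμ
    have h1 : 1 ∉ μ.parts := (Finset.mem_filter.1 hμ).2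
    apply Nat.Partition.ext
    show (μ.parts + Multiset.replicate k 1).filter (· ≠ 1) = μ.parts
    rw [Multiset.filter_add]
    have e1 : μ.parts.filter (· ≠ 1) = μ.parts :=
      Multiset.filter_eq_self.2 (fun a ha => fun h => h1 (by rwa [h] at ha))
    have e2 : (Multiset.replicate k 1).filter (· ≠ 1) = 0 :=
      Multiset.filter_eq_nil.2 (fun a ha => not_not.2 (Multiset.eq_of_mem_replicate ha))
    rw [e1, e2, add_zero]
  · intro lam hlam
    have hcnt : lam.parts.count 1 = k := (Finset.mem_filter.1 hlam).2
    show ((lam.parts.count 1 : ℚ)) ^ r / Dq lam.parts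
      = (k : ℚ) ^ r / (Nat.factorial k) * (Dq (lam.parts.filter (· ≠ 1)))⁻¹
    rw [Dq_filter_ne_one lam.parts, hcnt]
    rw [division_def, mul_inv, division_def, mul_assoc]

theorem rfac_ne {r : ℕ} : ((Nat.factorial r : ℚ)) ≠ 0 := by
  exact_mod_cast r.factorial_ne_zero

/-- For r ≥ 1, B_r = ∑_{λ ⊢ r} c(λ,1)^r / ∏_{l=1}^r (l^{c(λ,l)} · c(λ,l)!),
where the sum is over integer partitions λ of r and c(λ,l) is the number of parts of λ
equal to l. -/
theorem stmt_8 (r : ℕ) (hr : 0 < r) :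
    (bellNumber r : ℚ) =
      ∑ lam : Nat.Partition r,
        ((lam.parts.count 1 : ℚ)) ^ r /
          ∏ l ∈ Finset.Icc 1 r,
            ((l : ℚ) ^ (lam.parts.count l) * (Nat.factorial (lam.parts.count l) : ℚ)) := by
  classical
  have keyN : bellNumber r * r.factorial
      = ∑ k ∈ Finset.range (r + 1), r.choose k * (numDerangements (r - k) * k ^ r) :=
    (sum_fix_pow r).symm.trans (sum_fix_pow_eq r)
  have key : (bellNumber r : ℚ) * (Nat.factorial r : ℚ)
      = ∑ k ∈ Finset.range (r + 1),
          (r.choose k : ℚ) * ((numDerangements (r - k) : ℚ) * (k : ℚ) ^ r) := by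
    exact_mod_cast keyN
  calc (bellNumber r : ℚ)
      = (∑ k ∈ Finset.range (r + 1),
          (r.choose k : ℚ) * ((numDerangements (r - k) : ℚ) * (k : ℚ) ^ r))
          / (Nat.factorial r : ℚ) := by
        rw [← key, mul_div_cancel_right₀ _ rfac_ne]
    _ = ∑ k ∈ Finset.range (r + 1), (k : ℚ) ^ r / (Nat.factorial k) * Tq (r - k) := by
        rw [Finset.sum_div]
        refine Finset.sum_congr rfl fun k hk => ?_
        have hkr : k ≤ r := Nat.lt_succ_iff.1 (Finset.mem_range.1 hk)
        rw [Tq_eq, Nat.cast_choose ℚ hkr]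
        have h1 : ((Nat.factorial k : ℚ)) ≠ 0 := rfac_ne
        have h2 : ((Nat.factorial (r - k) : ℚ)) ≠ 0 := rfac_ne
        have h3 : ((Nat.factorial r : ℚ)) ≠ 0 := rfac_ne
        field_simp
    _ = ∑ lam : Nat.Partition r, ((lam.parts.count 1 : ℚ)) ^ r / Dq lam.parts :=
        (sum_split r).symm
    _ = _ := Finset.sum_congr rfl fun lam _ => by rw [Dq_eq_Icc]
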